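/- Fix N ≥ 1 and an N-periodic family of real matrices A_k ∈ ℝ^{n×n}, B_k ∈ ℝ^{n×m}, C_k ∈ ℝ^{m×n}, D_k ∈ ℝ^{m×m}, with every D_k invertible, and cycled matrices Ǎ, B̌, Č, Ď. Define Γ_k := A_k − B_k D_k⁻¹ C_k and Φ_inv := Γ_{N−1} Γ_{N−2} ··· Γ_0. Then ρ(Φ_inv) < 1 if and only if every complex number z₀ satisfying det [[z₀·I_{Nn} − Ǎ, −B̌], [Č, Ď]] = 0 has |z₀| < 1. -/

import Mathlib

open Matrix
open scoped ENNReal NNReal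

/-- Spectral radius of a real square matrix: the spectral radius (max |λ| over complex
eigenvalues) of the matrix viewed as a complex matrix. -/
noncomputable def specRad {ι : Type} [Fintype ι] [DecidableEq ι] (M : Matrix ι ι ℝ) : ℝ≥0∞ :=
  spectralRadius ℂ (M.map Complex.ofReal)

/-- The cycled (1-shift block-circulant) matrix: the (i,j) block equals `M j` if
`i = (j+1) mod N` and `0` otherwise. -/
def cyc (N : ℕ) {n m : ℕ} (M : ℕ → Matrix (Fin n) (Fin m) ℝ) :
    Matrix (Fin N × Fin n) (Fin N × Fin m) ℝ :=
  fun p q => if (p.1 : ℕ) = ((q.1 : ℕ) + 1) % N then M (q.1 : ℕ) p.2 q.2 else 0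

/-- Block-diagonal matrix `diag (M 0, …, M (N-1))`. -/
def bdiag (N : ℕ) {p n : ℕ} (M : ℕ → Matrix (Fin p) (Fin n) ℝ) :
    Matrix (Fin N × Fin p) (Fin N × Fin n) ℝ :=
  fun q r => if q.1 = r.1 then M (q.1 : ℕ) q.2 r.2 else 0

/-- The descending product `A (N-1) * A (N-2) * ⋯ * A 0` (monodromy-type product). -/
def prodDesc {n : ℕ} (A : ℕ → Matrix (Fin n) (Fin n) ℝ) (N : ℕ) : Matrix (Fin n) (Fin n) ℝ :=
  ((List.range N).reverse.map A).prod

/-- State transition product `Φ(j,i) = A (j-1) * ⋯ * A i` for `j > i`, and `Φ(i,i) = 1`. -/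
def stp {n : ℕ} (A : ℕ → Matrix (Fin n) (Fin n) ℝ) (j i : ℕ) : Matrix (Fin n) (Fin n) ℝ :=
  ((List.range' i (j - i)).reverse.map A).prod

/-- Periodic Markov parameter `M_k^{(j)} = C (k+j) * Φ(k+j, k+1) * B k`. -/
def markov {n m p : ℕ} (A : ℕ → Matrix (Fin n) (Fin n) ℝ) (B : ℕ → Matrix (Fin n) (Fin m) ℝ)
    (C : ℕ → Matrix (Fin p) (Fin n) ℝ) (k j : ℕ) : Matrix (Fin p) (Fin m) ℝ :=
  C (k + j) * stp A (k + j) (k + 1) * B k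

/-- Kronecker product `e_i ⊗ w` of the `(i+1)`-th standard unit vector of `ℝ^N` with `w`. -/
def kron {N q : ℕ} (i : Fin N) (w : Fin q → ℝ) : Fin N × Fin q → ℝ :=
  fun p => if p.1 = i then w p.2 else 0

/-- The residue `k mod N` as an element of `Fin N`. -/
def finMod (N : ℕ) (hN : 0 < N) (k : ℕ) : Fin N := ⟨k % N, Nat.mod_lt _ hN⟩

/-! ### Auxiliary complex versions -/

/-- Complex cycled matrix. -/
noncomputable def cycC (N : ℕ) {n m : ℕ} (M : ℕ → Matrix (Fin n) (Fin m) ℂ) :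
    Matrix (Fin N × Fin n) (Fin N × Fin m) ℂ :=
  fun p q => if (p.1 : ℕ) = ((q.1 : ℕ) + 1) % N then M (q.1 : ℕ) p.2 q.2 else 0

/-- Complex block diagonal matrix. -/
noncomputable def bdiagC (N : ℕ) {p n : ℕ} (M : ℕ → Matrix (Fin p) (Fin n) ℂ) :
    Matrix (Fin N × Fin p) (Fin N × Fin n) ℂ :=
  fun q r => if q.1 = r.1 then M (q.1 : ℕ) q.2 r.2 else 0

/-- Complex descending product. -/
noncomputable def prodC {n : ℕ} (G : ℕ → Matrix (Fin n) (Fin n) ℂ) (N : ℕ) : Matrix (Fin n) (Fin n) ℂ :=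
  ((List.range N).reverse.map G).prod

lemma mapRC_mul {a b c : ℕ} (M : Matrix (Fin a) (Fin b) ℝ) (P : Matrix (Fin b) (Fin c) ℝ) :
    (M * P).map Complex.ofReal = M.map Complex.ofReal * P.map Complex.ofReal := by
  ext i j
  simp [Matrix.map_apply, Matrix.mul_apply]

lemma map_cyc (N : ℕ) {n m : ℕ} (M : ℕ → Matrix (Fin n) (Fin m) ℝ) :
    (cyc N M).map Complex.ofReal = cycC N (fun k => (M k).map Complex.ofReal) := by
  ext p q
  simp [cyc, cycC, Matrix.map_apply, apply_ite Complex.ofReal]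

lemma map_bdiag (N : ℕ) {p n : ℕ} (M : ℕ → Matrix (Fin p) (Fin n) ℝ) :
    (bdiag N M).map Complex.ofReal = bdiagC N (fun k => (M k).map Complex.ofReal) := by
  ext q r
  simp [bdiag, bdiagC, Matrix.map_apply, apply_ite Complex.ofReal]

lemma prodC_succ {n : ℕ} (G : ℕ → Matrix (Fin n) (Fin n) ℂ) (i : ℕ) :
    prodC G (i + 1) = G i * prodC G i := by
  simp [prodC, List.range_succ]

lemma prodC_zero {n : ℕ} (G : ℕ → Matrix (Fin n) (Fin n) ℂ) : prodC G 0 = 1 := by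
  simp [prodC]

lemma map_prodDesc {n : ℕ} (A : ℕ → Matrix (Fin n) (Fin n) ℝ) (N : ℕ) :
    (prodDesc A N).map Complex.ofReal = prodC (fun k => (A k).map Complex.ofReal) N := by
  induction N with
  | zero => simp [prodDesc, prodC, Matrix.map_one]
  | succ i ih =>
      have h1 : prodDesc A (i + 1) = A i * prodDesc A i := by
        simp [prodDesc, List.range_succ]
      rw [h1, prodC_succ, ← ih, mapRC_mul]

lemma bdiagC_mul_bdiagC {N p n q : ℕ} (M1 : ℕ → Matrix (Fin p) (Fin n) ℂ)
    (M2 : ℕ → Matrix (Fin n) (Fin q) ℂ) :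
    bdiagC N M1 * bdiagC N M2 = bdiagC N (fun k => M1 k * M2 k) := by
  ext i j
  simp only [Matrix.mul_apply, bdiagC, Fintype.sum_prod_type]
  rw [Finset.sum_eq_single i.1]
  · by_cases h : i.1 = j.1 <;> simp [h, Matrix.mul_apply]
  · intro b _ hb
    simp [Ne.symm hb]
  · simp

lemma bdiagC_one {N n : ℕ} : bdiagC N (fun _ => (1 : Matrix (Fin n) (Fin n) ℂ)) = 1 := by
  ext i j
  rcases i with ⟨i1, i2⟩; rcases j with ⟨j1, j2⟩
  by_cases h1 : i1 = j1 <;> by_cases h2 : i2 = j2 <;>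
    simp [bdiagC, h1, h2, Matrix.one_apply, Prod.ext_iff]

lemma cycC_mul_bdiagC {N p n q : ℕ} (M : ℕ → Matrix (Fin p) (Fin n) ℂ)
    (E : ℕ → Matrix (Fin n) (Fin q) ℂ) :
    cycC N M * bdiagC N E = cycC N (fun k => M k * E k) := by
  ext i j
  simp only [Matrix.mul_apply, cycC, bdiagC, Fintype.sum_prod_type]
  rw [Finset.sum_eq_single j.1]
  · by_cases h : (i.1 : ℕ) = ((j.1 : ℕ) + 1) % N <;> simp [h, Matrix.mul_apply]
  · intro b _ hb
    simp [hb]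
  · simp

lemma cycC_sub {N n m : ℕ} (M1 M2 : ℕ → Matrix (Fin n) (Fin m) ℂ) :
    cycC N M1 - cycC N M2 = cycC N (fun k => M1 k - M2 k) := by
  ext i j
  by_cases h : (i.1 : ℕ) = ((j.1 : ℕ) + 1) % N <;> simp [cycC, h]

/-! ### Fin arithmetic -/

lemma val_add_one {N : ℕ} [NeZero N] (j : Fin N) :
    ((j + 1 : Fin N) : ℕ) = ((j : ℕ) + 1) % N := by
  rw [Fin.val_add, Fin.val_one', Nat.add_mod (j : ℕ) 1 N, Nat.mod_eq_of_lt j.isLt]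

lemma fin_succ_inj {N : ℕ} (j q : Fin N) (h : ((j : ℕ) + 1) % N = ((q : ℕ) + 1) % N) :
    j = q := by
  have hj := j.isLt; have hq := q.isLt
  rcases Nat.lt_or_ge ((j : ℕ) + 1) N with h1 | h1
  · rw [Nat.mod_eq_of_lt h1] at h
    rcases Nat.lt_or_ge ((q : ℕ) + 1) N with h2 | h2
    · rw [Nat.mod_eq_of_lt h2] at h; exact Fin.ext (by omega)
    · have h2' : (q : ℕ) + 1 = N := by omega
      rw [h2', Nat.mod_self] at h; omega
  · have h1' : (j : ℕ) + 1 = N := by omega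
    rw [h1', Nat.mod_self] at h
    rcases Nat.lt_or_ge ((q : ℕ) + 1) N with h2 | h2
    · rw [Nat.mod_eq_of_lt h2] at h; omega
    · have h2' : (q : ℕ) + 1 = N := by omega
      exact Fin.ext (by omega)

/-! ### Eigen-structure of the cycled matrix -/

lemma cycC_mulVec_row {N n : ℕ} [NeZero N] (G : ℕ → Matrix (Fin n) (Fin n) ℂ)
    (v : Fin N × Fin n → ℂ) (j : Fin N) (r : Fin n) :
    (cycC N G *ᵥ v) (j + 1, r) = (G (j : ℕ) *ᵥ fun c => v (j, c)) r := by
  simp only [Matrix.mulVec, dotProduct, cycC, Fintype.sum_prod_type]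
  rw [Finset.sum_eq_single j]
  · simp [val_add_one, Matrix.mulVec, dotProduct]
  · intro q _ hq
    have hcond : ¬ (((j + 1 : Fin N) : ℕ) = ((q : ℕ) + 1) % N) := by
      rw [val_add_one]
      intro h
      exact hq (fin_succ_inj q j h.symm)
    simp [hcond]
  · simp

lemma cycC_mulVec_eq_iff {N n : ℕ} [NeZero N] (G : ℕ → Matrix (Fin n) (Fin n) ℂ)
    (v : Fin N × Fin n → ℂ) (z : ℂ) :
    cycC N G *ᵥ v = z • v ↔
      ∀ j : Fin N, (G (j : ℕ) *ᵥ fun c => v (j, c)) = z • fun c => v (j + 1, c) := by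
  constructor
  · intro h j
    funext r
    have h1 := congrFun h (j + 1, r)
    rw [cycC_mulVec_row] at h1
    simpa using h1
  · intro h
    funext p
    obtain ⟨i, r⟩ := p
    have hi : i = (i - 1) + 1 := (sub_add_cancel i 1).symm
    rw [hi, cycC_mulVec_row]
    have h' := congrFun (h (i - 1)) r
    simpa using h'

/-! ### Determinant lemmas -/

lemma det_smul_one_sub_eq_zero_iff {ι : Type} [Fintype ι] [DecidableEq ι]
    (M : Matrix ι ι ℂ) (z : ℂ) :
    (z • (1 : Matrix ι ι ℂ) - M).det = 0 ↔ ∃ v ≠ 0, M *ᵥ v = z • v := by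
  rw [← Matrix.exists_mulVec_eq_zero_iff]
  apply exists_congr; intro v
  apply and_congr_right; intro _
  rw [Matrix.sub_mulVec, sub_eq_zero, Matrix.smul_mulVec, Matrix.one_mulVec]
  exact eq_comm

lemma det_prodC_eq_zero_iff {n N : ℕ} (G : ℕ → Matrix (Fin n) (Fin n) ℂ) :
    (prodC G N).det = 0 ↔ ∃ k < N, (G k).det = 0 := by
  induction N with
  | zero => simp [prodC_zero]
  | succ i ih =>
      rw [prodC_succ, Matrix.det_mul, mul_eq_zero, ih]
      constructor
      · rintro (h | ⟨k, hk, h⟩)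
        · exact ⟨i, by omega, h⟩
        · exact ⟨k, by omega, h⟩
      · rintro ⟨k, hk, h⟩
        rcases Nat.lt_or_ge k i with h2 | h2
        · exact Or.inr ⟨k, h2, h⟩
        · have : k = i := by omega
          exact Or.inl (this ▸ h)

lemma det_cycC_eq_zero_iff {n N : ℕ} [NeZero N] (G : ℕ → Matrix (Fin n) (Fin n) ℂ) :
    (cycC N G).det = 0 ↔ ∃ k < N, (G k).det = 0 := by
  constructor
  · intro h
    obtain ⟨v, hv0, hv⟩ := Matrix.exists_mulVec_eq_zero_iff.mpr h
    have hv' : cycC N G *ᵥ v = (0 : ℂ) • v := by simpa using hv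
    have hrec := (cycC_mulVec_eq_iff G v 0).mp hv'
    obtain ⟨p, hp⟩ := Function.ne_iff.mp hv0
    refine ⟨(p.1 : ℕ), p.1.isLt, Matrix.exists_mulVec_eq_zero_iff.mp
      ⟨fun c => v (p.1, c), ?_, by simpa using hrec p.1⟩⟩
    intro hcon
    exact hp (by simpa using congrFun hcon p.2)
  · rintro ⟨k, hk, h⟩
    obtain ⟨w, hw0, hw⟩ := Matrix.exists_mulVec_eq_zero_iff.mpr h
    set j : Fin N := ⟨k, hk⟩
    refine Matrix.exists_mulVec_eq_zero_iff.mp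
      ⟨fun p => if p.1 = j then w p.2 else 0, ?_, ?_⟩
    · obtain ⟨c, hc⟩ := Function.ne_iff.mp hw0
      intro hcon
      exact hc (by simpa using congrFun hcon (j, c))
    · have : cycC N G *ᵥ (fun p => if p.1 = j then w p.2 else 0) =
        (0 : ℂ) • (fun p => if p.1 = j then w p.2 else 0) := by
        rw [cycC_mulVec_eq_iff]
        intro j'
        by_cases hj : j' = j
        · subst hj
          funext c
          simpa [Matrix.mulVec, dotProduct] using congrFun hw c
        · funext c
          simp [hj, Matrix.mulVec, dotProduct]
      simpa using this

/-- The master determinant identity (root version): the roots of the characteristic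
polynomial of the cycled matrix are exactly the `N`-th roots of eigenvalues of the
monodromy product. -/
lemma det_cycC_charpoly_iff {n N : ℕ} [NeZero N] (G : ℕ → Matrix (Fin n) (Fin n) ℂ)
    (z : ℂ) :
    (z • (1 : Matrix (Fin N × Fin n) (Fin N × Fin n) ℂ) - cycC N G).det = 0 ↔
      (z ^ N • (1 : Matrix (Fin n) (Fin n) ℂ) - prodC G N).det = 0 := by
  have hNpos : 0 < N := Nat.pos_of_ne_zero (NeZero.ne N)
  by_cases hz : z = 0
  · subst hz
    rw [zero_pow (by omega : N ≠ 0)]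
    simp only [zero_smul, zero_sub, Matrix.det_neg]
    rw [mul_eq_zero, mul_eq_zero]
    have h1 : ((-1 : ℂ) ^ Fintype.card (Fin N × Fin n)) ≠ 0 := pow_ne_zero _ (by norm_num)
    have h2 : ((-1 : ℂ) ^ Fintype.card (Fin n)) ≠ 0 := pow_ne_zero _ (by norm_num)
    simp only [h1, h2, false_or]
    rw [det_cycC_eq_zero_iff, det_prodC_eq_zero_iff]
  · rw [det_smul_one_sub_eq_zero_iff, det_smul_one_sub_eq_zero_iff]
    constructor
    · rintro ⟨v, hv0, hv⟩
      have hrec := (cycC_mulVec_eq_iff G v z).mp hv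
      -- the claim by induction
      have claim : ∀ i (hi : i < N) (c : Fin n),
          z ^ i * v (⟨i, hi⟩, c) = (prodC G i *ᵥ fun c => v (⟨0, hNpos⟩, c)) c := by
        intro i
        induction i with
        | zero => intro hi c; simp [prodC_zero, Matrix.one_mulVec]
        | succ i ih =>
            intro hi c
            have hi' : i < N := by omega
            have ihfun : (prodC G i *ᵥ fun c => v (⟨0, hNpos⟩, c)) =
                fun c => z ^ i * v (⟨i, hi'⟩, c) := by
              funext c'; exact (ih hi' c').symm
            have hfin : (⟨i, hi'⟩ + 1 : Fin N) = ⟨i + 1, hi⟩ := by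
              apply Fin.ext
              rw [val_add_one]
              exact Nat.mod_eq_of_lt hi
            have hstep := congrFun (hrec ⟨i, hi'⟩) c
            rw [hfin] at hstep
            simp only [Pi.smul_apply, smul_eq_mul] at hstep
            rw [prodC_succ, ← Matrix.mulVec_mulVec, ihfun]
            simp only [Matrix.mulVec, dotProduct] at hstep ⊢
            rw [pow_succ]
            calc z ^ i * z * v (⟨i+1, hi⟩, c)
                = z ^ i * (z * v (⟨i+1, hi⟩, c)) := by ring
              _ = z ^ i * ∑ x, G i c x * v (⟨i, hi'⟩, x) := by rw [← hstep]
              _ = ∑ x, G i c x * (z ^ i * v (⟨i, hi'⟩, x)) := by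
                  rw [Finset.mul_sum]; apply Finset.sum_congr rfl; intro x _; ring
      -- v₀ ≠ 0
      set v0 : Fin n → ℂ := fun c => v (⟨0, hNpos⟩, c) with hv0def
      have hv0ne : v0 ≠ 0 := by
        intro hcon
        apply hv0
        funext p
        obtain ⟨⟨i, hi⟩, c⟩ := p
        have := claim i hi c
        rw [hcon] at this
        simp only [Matrix.mulVec_zero, Pi.zero_apply] at this
        have hzi : z ^ i ≠ 0 := pow_ne_zero _ hz
        have := mul_eq_zero.mp this
        simp only [Pi.zero_apply]
        tauto
      refine ⟨v0, hv0ne, ?_⟩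
      -- monodromy equation
      have hN1 : N = (N - 1) + 1 := by omega
      have hlast : N - 1 < N := by omega
      have hfin0 : (⟨N - 1, hlast⟩ + 1 : Fin N) = ⟨0, hNpos⟩ := by
        apply Fin.ext
        rw [val_add_one]
        simp only []
        have : (N - 1) + 1 = N := by omega
        rw [this, Nat.mod_self]
      have hstep := hrec ⟨N - 1, hlast⟩
      rw [hfin0] at hstep
      funext c
      have hclaimfun : (prodC G (N - 1) *ᵥ v0) = fun c => z ^ (N - 1) * v (⟨N - 1, hlast⟩, c) := by
        funext c'; exact (claim (N - 1) hlast c').symm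
      rw [hN1, prodC_succ, ← Matrix.mulVec_mulVec, hclaimfun]
      have hstepc := congrFun hstep c
      simp only [Pi.smul_apply, smul_eq_mul] at hstepc
      simp only [Matrix.mulVec, dotProduct, Pi.smul_apply, smul_eq_mul] at hstepc ⊢
      calc ∑ x, G (N - 1) c x * (z ^ (N - 1) * v (⟨N - 1, hlast⟩, x))
          = z ^ (N - 1) * ∑ x, G (N - 1) c x * v (⟨N - 1, hlast⟩, x) := by
            rw [Finset.mul_sum]; apply Finset.sum_congr rfl; intro x _; ring
        _ = z ^ (N - 1) * (z * v0 c) := by rw [hstepc]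
        _ = z ^ ((N - 1) + 1) * v0 c := by rw [pow_succ]; ring
    · rintro ⟨w, hw0, hw⟩
      refine ⟨fun p => z⁻¹ ^ (p.1 : ℕ) * (prodC G (p.1 : ℕ) *ᵥ w) p.2, ?_, ?_⟩
      · obtain ⟨c, hc⟩ := Function.ne_iff.mp hw0
        intro hcon
        have := congrFun hcon (⟨0, Nat.pos_of_ne_zero (NeZero.ne N)⟩, c)
        simp [prodC_zero, Matrix.one_mulVec] at this
        exact hc this
      · rw [cycC_mulVec_eq_iff]
        intro j
        funext c
        simp only [Pi.smul_apply, smul_eq_mul]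
        have hlhs : (G (j : ℕ) *ᵥ fun c => z⁻¹ ^ (j : ℕ) * (prodC G (j : ℕ) *ᵥ w) c) c =
            z⁻¹ ^ (j : ℕ) * (prodC G ((j : ℕ) + 1) *ᵥ w) c := by
          rw [prodC_succ, ← Matrix.mulVec_mulVec]
          simp only [Matrix.mulVec, dotProduct, Finset.mul_sum]
          apply Finset.sum_congr rfl; intro x _
          apply Finset.sum_congr rfl; intro y _
          ring
        rw [hlhs]
        by_cases hcase : (j : ℕ) + 1 < N
        · have hval : ((j + 1 : Fin N) : ℕ) = (j : ℕ) + 1 := by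
            rw [val_add_one]; exact Nat.mod_eq_of_lt hcase
          rw [hval]
          rw [pow_succ]
          field_simp
        · have hjN : (j : ℕ) + 1 = N := by have := j.isLt; omega
          have hval : ((j + 1 : Fin N) : ℕ) = 0 := by
            rw [val_add_one, hjN, Nat.mod_self]
          rw [hval]
          simp only [pow_zero, one_mul, prodC_zero, Matrix.one_mulVec]
          have hphi : (prodC G ((j : ℕ) + 1) *ᵥ w) c = z ^ N * w c := by
            rw [hjN, hw]; simp
          rw [hphi]
          have hrw : z⁻¹ ^ (j : ℕ) * (z ^ N * w c) = z * w c := by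
            have : z ^ N = z ^ (j : ℕ) * z := by
              rw [← pow_succ, hjN]
            rw [this, inv_pow]
            have hzj : z ^ (j : ℕ) ≠ 0 := pow_ne_zero _ hz
            field_simp
          rw [hrw]

/-! ### Spectrum lemmas -/

lemma mem_spectrum_iff_det {ι : Type} [Fintype ι] [DecidableEq ι]
    (M : Matrix ι ι ℂ) (z : ℂ) :
    z ∈ spectrum ℂ M ↔ (z • (1 : Matrix ι ι ℂ) - M).det = 0 := by
  rw [spectrum.mem_iff, Algebra.algebraMap_eq_smul_one,
    Matrix.isUnit_iff_isUnit_det, isUnit_iff_ne_zero, not_not]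

lemma nnnorm_coe_lt_one_iff (z : ℂ) : ((‖z‖₊ : ℝ≥0∞) < 1) ↔ ‖z‖ < 1 := by
  rw [← ENNReal.coe_one, ENNReal.coe_lt_coe, ← NNReal.coe_lt_coe]
  simp

lemma spectralRadius_lt_one_iff {ι : Type} [Fintype ι] [DecidableEq ι]
    (M : Matrix ι ι ℂ) :
    spectralRadius ℂ M < 1 ↔ ∀ z ∈ spectrum ℂ M, ‖z‖ < 1 := by
  rw [spectralRadius]
  constructor
  · intro h z hz
    rw [← nnnorm_coe_lt_one_iff]
    exact lt_of_le_of_lt (le_iSup₂ (f := fun k (_ : k ∈ spectrum ℂ M) => (‖k‖₊ : ℝ≥0∞)) z hz) h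
  · intro h
    have hfin := Matrix.finite_spectrum (R := ℂ) M
    calc (⨆ z ∈ spectrum ℂ M, (‖z‖₊ : ℝ≥0∞))
        ≤ hfin.toFinset.sup (fun k => (‖k‖₊ : ℝ≥0∞)) := by
          apply iSup₂_le
          intro k hk
          exact Finset.le_sup (f := fun k => (‖k‖₊ : ℝ≥0∞)) (hfin.mem_toFinset.mpr hk)
      _ < 1 := by
          have hb : (⊥ : ℝ≥0∞) < 1 := by simp
          rw [Finset.sup_lt_iff hb]
          intro k hk
          rw [nnnorm_coe_lt_one_iff]
          exact h k (hfin.mem_toFinset.mp hk)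

/-! ### Main theorem -/

/-- Stability of the periodic inverse is equivalent to the periodic
minimum phase condition: `ρ(Φ_inv) < 1` iff every root `z₀` of the determinant of the
cycled system matrix `[[z₀ I - Ǎ, -B̌], [Č, Ď]]` satisfies `|z₀| < 1`. -/
theorem specRad_monodromy_iff_minphase {n m N : ℕ} (hN : 1 ≤ N)
    (A : ℕ → Matrix (Fin n) (Fin n) ℝ) (B : ℕ → Matrix (Fin n) (Fin m) ℝ)
    (C : ℕ → Matrix (Fin m) (Fin n) ℝ) (D : ℕ → Matrix (Fin m) (Fin m) ℝ)
    (hDinv : ∀ k, IsUnit (D k).det) :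
    specRad (prodDesc (fun k => A k - B k * (D k)⁻¹ * C k) N) < 1 ↔
      ∀ z₀ : ℂ,
        (Matrix.fromBlocks
            (z₀ • (1 : Matrix (Fin N × Fin n) (Fin N × Fin n) ℂ) -
              (cyc N A).map Complex.ofReal)
            (-((cyc N B).map Complex.ofReal))
            ((bdiag N C).map Complex.ofReal)
            ((bdiag N D).map Complex.ofReal)).det = 0 →
          ‖z₀‖ < 1 := by
  haveI : NeZero N := ⟨by omega⟩
  -- notation: complex versions
  set Ac : ℕ → Matrix (Fin n) (Fin n) ℂ := fun k => (A k).map Complex.ofReal with hAc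
  set Bc : ℕ → Matrix (Fin n) (Fin m) ℂ := fun k => (B k).map Complex.ofReal with hBc
  set Cc : ℕ → Matrix (Fin m) (Fin n) ℂ := fun k => (C k).map Complex.ofReal with hCc
  set Dc : ℕ → Matrix (Fin m) (Fin m) ℂ := fun k => (D k).map Complex.ofReal with hDc
  -- det facts about Dc
  have hDcdet : ∀ k, (Dc k).det ≠ 0 := by
    intro k
    have h1 : (Dc k).det = Complex.ofReal (D k).det := (RingHom.map_det Complex.ofRealHom (D k)).symm
    rw [h1]
    exact Complex.ofReal_ne_zero.mpr (hDinv k).ne_zero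
  have hDcunit : ∀ k, IsUnit (Dc k).det := fun k => isUnit_iff_ne_zero.mpr (hDcdet k)
  -- map of inverse
  have hmapinv : ∀ k, ((D k)⁻¹).map Complex.ofReal = (Dc k)⁻¹ := by
    intro k
    symm
    apply Matrix.inv_eq_right_inv
    have : Dc k * ((D k)⁻¹).map Complex.ofReal = ((D k) * (D k)⁻¹).map Complex.ofReal := by
      rw [mapRC_mul]
    rw [this, Matrix.mul_nonsing_inv _ (hDinv k), Matrix.map_one _ Complex.ofReal_zero
      Complex.ofReal_one]
  -- invertible block diagonal
  haveI hDinvert : Invertible (bdiagC N Dc) := by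
    refine ⟨bdiagC N (fun k => (Dc k)⁻¹), ?_, ?_⟩
    · rw [bdiagC_mul_bdiagC]
      have : (fun k => (Dc k)⁻¹ * Dc k) = fun _ => (1 : Matrix (Fin m) (Fin m) ℂ) := by
        funext k; exact Matrix.nonsing_inv_mul _ (hDcunit k)
      rw [this, bdiagC_one]
    · rw [bdiagC_mul_bdiagC]
      have : (fun k => Dc k * (Dc k)⁻¹) = fun _ => (1 : Matrix (Fin m) (Fin m) ℂ) := by
        funext k; exact Matrix.mul_nonsing_inv _ (hDcunit k)
      rw [this, bdiagC_one]
  have hDddet : (bdiagC N Dc).det ≠ 0 := by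
    have := Matrix.isUnit_det_of_invertible (bdiagC N Dc)
    exact this.ne_zero
  -- the Schur complement computation
  have hSchur : ∀ z₀ : ℂ,
      (Matrix.fromBlocks
          (z₀ • (1 : Matrix (Fin N × Fin n) (Fin N × Fin n) ℂ) - (cyc N A).map Complex.ofReal)
          (-((cyc N B).map Complex.ofReal))
          ((bdiag N C).map Complex.ofReal)
          ((bdiag N D).map Complex.ofReal)).det =
        (bdiagC N Dc).det *
          (z₀ • (1 : Matrix (Fin N × Fin n) (Fin N × Fin n) ℂ) -
            cycC N (fun k => Ac k - Bc k * (Dc k)⁻¹ * Cc k)).det := by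
    intro z₀
    rw [map_cyc, map_cyc, map_bdiag, map_bdiag]
    rw [Matrix.det_fromBlocks₂₂]
    congr 1
    have hinvOf : (⅟(bdiagC N Dc) : Matrix (Fin N × Fin m) (Fin N × Fin m) ℂ) =
        bdiagC N (fun k => (Dc k)⁻¹) := by
      rw [Matrix.invOf_eq_nonsing_inv]
      apply Matrix.inv_eq_right_inv
      rw [bdiagC_mul_bdiagC]
      have h2 : (fun k => Dc k * (Dc k)⁻¹) = fun _ => (1 : Matrix (Fin m) (Fin m) ℂ) := by
        funext k; exact Matrix.mul_nonsing_inv _ (hDcunit k)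
      rw [h2, bdiagC_one]
    rw [hinvOf]
    rw [Matrix.neg_mul, Matrix.neg_mul, cycC_mul_bdiagC, cycC_mul_bdiagC, sub_neg_eq_add]
    rw [sub_add, cycC_sub]
  -- spectral radius side
  have hmap : (prodDesc (fun k => A k - B k * (D k)⁻¹ * C k) N).map Complex.ofReal =
      prodC (fun k => Ac k - Bc k * (Dc k)⁻¹ * Cc k) N := by
    rw [map_prodDesc]
    apply congrArg (fun G => prodC G N)
    funext k
    show (A k - B k * (D k)⁻¹ * C k).map Complex.ofReal = Ac k - Bc k * (Dc k)⁻¹ * Cc k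
    have hsub : ((A k - B k * (D k)⁻¹ * C k)).map Complex.ofReal =
        (A k).map Complex.ofReal - (B k * (D k)⁻¹ * C k).map Complex.ofReal := by
      ext i j; simp [Matrix.map_apply, Matrix.sub_apply]
    rw [hsub]
    have hmul : (B k * (D k)⁻¹ * C k).map Complex.ofReal =
        Bc k * (Dc k)⁻¹ * Cc k := by
      rw [mapRC_mul, mapRC_mul]
      show Bc k * ((D k)⁻¹).map Complex.ofReal * Cc k = _
      rw [hmapinv]
    rw [hmul]
  set Gc : ℕ → Matrix (Fin n) (Fin n) ℂ := fun k => Ac k - Bc k * (Dc k)⁻¹ * Cc k with hGc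
  rw [specRad, hmap, spectralRadius_lt_one_iff]
  constructor
  · intro h z₀ hdet
    rw [hSchur z₀, mul_eq_zero] at hdet
    rcases hdet with hdet | hdet
    · exact absurd hdet hDddet
    · rw [det_cycC_charpoly_iff] at hdet
      have hz0N : z₀ ^ N ∈ spectrum ℂ (prodC Gc N) := by
        rw [mem_spectrum_iff_det]
        exact hdet
      have habs := h _ hz0N
      by_contra hcon
      push_neg at hcon
      have : (1 : ℝ) ≤ ‖z₀ ^ N‖ := by
        rw [norm_pow]
        calc (1:ℝ) = 1 ^ N := (one_pow N).symm
          _ ≤ ‖z₀‖ ^ N := pow_le_pow_left₀ (by norm_num) hcon N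
      linarith
  · intro h lam hlam
    rw [mem_spectrum_iff_det] at hlam
    obtain ⟨z₀, hz₀⟩ := IsAlgClosed.exists_pow_nat_eq lam (by omega : 0 < N)
    rw [← hz₀] at hlam
    rw [← det_cycC_charpoly_iff] at hlam
    have hdet : (Matrix.fromBlocks
        (z₀ • (1 : Matrix (Fin N × Fin n) (Fin N × Fin n) ℂ) - (cyc N A).map Complex.ofReal)
        (-((cyc N B).map Complex.ofReal))
        ((bdiag N C).map Complex.ofReal)
        ((bdiag N D).map Complex.ofReal)).det = 0 := by
      rw [hSchur z₀, hlam, mul_zero]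
    have habs := h z₀ hdet
    rw [← hz₀, norm_pow]
    calc ‖z₀‖ ^ N ≤ ‖z₀‖ ^ 1 := by
          apply pow_le_pow_of_le_one (by positivity) (le_of_lt habs) hN
      _ = ‖z₀‖ := pow_one _
      _ < 1 := habs
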